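/- For every x < 1, the derivative of the function Φ(x) := K((1-√(1-x))/(1+√(1-x))) / √(1+√(1-x)) is given by Φ'(x) = [1/(4√((1-x)(1+√(1-x))³))] · K((1-√(1-x))/(1+√(1-x))) + [1/√((1-x)(1+√(1-x))⁵)] · K'((1-√(1-x))/(1+√(1-x))). -/

import Mathlib

/-- The complete elliptic integral of the first kind,
`K(m) = ∫₀¹ dζ / √((1-ζ²)(1-mζ²))`, defined for `m < 1`. -/
noncomputable def ellipticK (m : ℝ) : ℝ :=
  ∫ ζ in (0:ℝ)..1, 1 / Real.sqrt ((1 - ζ ^ 2) * (1 - m * ζ ^ 2))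

/-- `Φ(x) = K((1-√(1-x))/(1+√(1-x))) / √(1+√(1-x))`, defined for `x < 1`. -/
noncomputable def Phi (x : ℝ) : ℝ :=
  ellipticK ((1 - Real.sqrt (1 - x)) / (1 + Real.sqrt (1 - x))) /
    Real.sqrt (1 + Real.sqrt (1 - x))

open MeasureTheory Metric Real

lemma integrable_inv_sqrt_one_sub_sq :
    IntervalIntegrable (fun t : ℝ => (Real.sqrt (1 - t ^ 2))⁻¹) volume 0 1 := by
  have h1 : IntervalIntegrable (fun t : ℝ => t ^ (-(1/2) : ℝ)) volume 0 1 :=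
    intervalIntegral.intervalIntegrable_rpow' (by norm_num)
  have h2 : IntervalIntegrable (fun t : ℝ => (1 - t) ^ (-(1/2) : ℝ)) volume 0 1 := by
    simpa using (h1.comp_sub_left 1).symm
  apply h2.mono_fun
  · exact ((Real.continuous_sqrt.comp
      (continuous_const.sub (continuous_pow 2))).measurable.inv).aestronglyMeasurable
  · filter_upwards [ae_restrict_mem measurableSet_uIoc] with t ht
    rw [Set.uIoc_of_le (by norm_num : (0:ℝ) ≤ 1)] at ht
    obtain ⟨ht0, ht1⟩ := ht
    have h1t : (0:ℝ) ≤ 1 - t := by linarith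
    have hrw : (1 - t) ^ (-(1/2) : ℝ) = (Real.sqrt (1 - t))⁻¹ := by
      rw [Real.rpow_neg h1t, Real.sqrt_eq_rpow]
    have key : Real.sqrt (1 - t) ≤ Real.sqrt (1 - t ^ 2) := by
      apply Real.sqrt_le_sqrt; nlinarith
    rw [Real.norm_eq_abs, Real.norm_eq_abs, abs_of_nonneg (by positivity),
      abs_of_nonneg (by positivity), hrw]
    rcases eq_or_lt_of_le ht1 with h | h
    · rw [h]; norm_num
    · exact inv_anti₀ (Real.sqrt_pos.2 (by linarith)) key

lemma ellipticK_differentiableAt {m : ℝ} (hm : m < 1) : DifferentiableAt ℝ ellipticK m := by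
  set c : ℝ := min ((1 - m) / 2) 1 with hc_def
  have hc : 0 < c := lt_min (by linarith) one_pos
  have hcs : 0 < Real.sqrt c := Real.sqrt_pos.2 hc
  set ε : ℝ := (1 - m) / 2 with hε_def
  have hε : 0 < ε := by simp only [hε_def]; linarith
  -- uniform lower bound on 1 - x * t ^ 2
  have hkey : ∀ x ∈ Metric.ball m ε, ∀ t : ℝ, t ∈ Set.Ioc (0:ℝ) 1 → c ≤ 1 - x * t ^ 2 := by
    intro x hx t ht
    rw [Metric.mem_ball, Real.dist_eq, abs_sub_lt_iff] at hx
    have hx2 : x ≤ (1 + m) / 2 := by simp only [hε_def] at hx; linarith [hx.1]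
    have ht2 : t ^ 2 ≤ 1 := by nlinarith [ht.1, ht.2]
    have ht0 : 0 ≤ t ^ 2 := sq_nonneg t
    rcases le_total x 0 with h | h
    · have h1 : x * t ^ 2 ≤ 0 := mul_nonpos_of_nonpos_of_nonneg h ht0
      have h2 := min_le_right ((1 - m) / 2) 1
      simp only [hc_def] at *; linarith
    · have h1 : x * t ^ 2 ≤ x := by nlinarith
      have h2 := min_le_left ((1 - m) / 2) 1
      simp only [hc_def] at *; linarith
  have hmm : m ∈ Metric.ball m ε := Metric.mem_ball_self hε
  have hne : ∀ᵐ t : ℝ ∂MeasureTheory.volume, t ≠ 1 := by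
    rw [MeasureTheory.ae_iff]
    simp only [not_not, Set.setOf_eq_eq_singleton]
    exact MeasureTheory.measure_singleton 1
  set F' : ℝ → ℝ → ℝ := fun x t => (1 - t ^ 2) * t ^ 2 /
    (2 * Real.sqrt ((1 - t ^ 2) * (1 - x * t ^ 2)) * ((1 - t ^ 2) * (1 - x * t ^ 2))) with hF'_def
  have hmeas : ∀ x : ℝ, MeasureTheory.AEStronglyMeasurable
      (fun t : ℝ => 1 / Real.sqrt ((1 - t ^ 2) * (1 - x * t ^ 2)))
      (MeasureTheory.volume.restrict (Set.uIoc (0:ℝ) 1)) := by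
    intro x
    have hcont : Continuous fun t : ℝ => Real.sqrt ((1 - t ^ 2) * (1 - x * t ^ 2)) := by
      fun_prop
    exact (measurable_const.div hcont.measurable).aestronglyMeasurable
  have hF'meas : MeasureTheory.AEStronglyMeasurable (F' m)
      (MeasureTheory.volume.restrict (Set.uIoc (0:ℝ) 1)) := by
    have c1 : Continuous fun t : ℝ => (1 - t ^ 2) * t ^ 2 := by fun_prop
    have c2 : Continuous fun t : ℝ =>
        2 * Real.sqrt ((1 - t ^ 2) * (1 - m * t ^ 2)) * ((1 - t ^ 2) * (1 - m * t ^ 2)) := by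
      fun_prop
    exact (c1.measurable.div c2.measurable).aestronglyMeasurable
  have hmono := integrable_inv_sqrt_one_sub_sq
  have hF_int : IntervalIntegrable
      (fun t : ℝ => 1 / Real.sqrt ((1 - t ^ 2) * (1 - m * t ^ 2)))
      MeasureTheory.volume 0 1 := by
    apply (hmono.const_mul (Real.sqrt c)⁻¹).mono_fun (hmeas m)
    filter_upwards [MeasureTheory.ae_restrict_mem measurableSet_uIoc] with t ht
    rw [Set.uIoc_of_le (by norm_num : (0:ℝ) ≤ 1)] at ht
    have ht2 : 0 ≤ 1 - t ^ 2 := by nlinarith [ht.1, ht.2]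
    have hb := hkey m hmm t ht
    rw [Real.norm_eq_abs, Real.norm_eq_abs, abs_of_nonneg (by positivity),
      abs_of_nonneg (by positivity)]
    rcases eq_or_lt_of_le ht.2 with h | h
    · rw [h]; simp
    · have ht2' : 0 < 1 - t ^ 2 := by nlinarith [ht.1]
      rw [one_div, Real.sqrt_mul ht2'.le, mul_inv]
      have h1 : (Real.sqrt (1 - t ^ 2))⁻¹ ≤ (Real.sqrt (1 - t ^ 2))⁻¹ := le_refl _
      have h2 : (Real.sqrt (1 - m * t ^ 2))⁻¹ ≤ (Real.sqrt c)⁻¹ :=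
        inv_anti₀ hcs (Real.sqrt_le_sqrt hb)
      rw [mul_comm]
      exact mul_le_mul h2 h1 (by positivity) (by positivity)
  have hbound_int : IntervalIntegrable
      (fun t : ℝ => (2 * c * Real.sqrt c)⁻¹ * (Real.sqrt (1 - t ^ 2))⁻¹)
      MeasureTheory.volume 0 1 := hmono.const_mul _
  have hmain := intervalIntegral.hasDerivAt_integral_of_dominated_loc_of_deriv_le
    (F := fun x t => 1 / Real.sqrt ((1 - t ^ 2) * (1 - x * t ^ 2))) (F' := F')
    (x₀ := m) (a := 0) (b := 1) (μ := MeasureTheory.volume)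
    (bound := fun t => (2 * c * Real.sqrt c)⁻¹ * (Real.sqrt (1 - t ^ 2))⁻¹)
    (Metric.ball_mem_nhds m hε) (Filter.Eventually.of_forall hmeas) hF_int hF'meas ?_ hbound_int ?_
  · exact hmain.2.differentiableAt
  · -- bound on F'
    filter_upwards [hne] with t htne hmem x hx
    rw [Set.uIoc_of_le (by norm_num : (0:ℝ) ≤ 1)] at hmem
    have ht1 : t < 1 := lt_of_le_of_ne hmem.2 htne
    have ht2 : 0 < 1 - t ^ 2 := by nlinarith [hmem.1]
    have hb := hkey x hx t hmem
    have hu : 0 < (1 - t ^ 2) * (1 - x * t ^ 2) := mul_pos ht2 (lt_of_lt_of_le hc hb)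
    set A := Real.sqrt (1 - t ^ 2) with hA_def
    have hA : 0 < A := Real.sqrt_pos.2 ht2
    have hA2 : A ^ 2 = 1 - t ^ 2 := Real.sq_sqrt ht2.le
    have hsu : A * Real.sqrt c ≤ Real.sqrt ((1 - t ^ 2) * (1 - x * t ^ 2)) := by
      rw [Real.sqrt_mul ht2.le]
      exact mul_le_mul_of_nonneg_left (Real.sqrt_le_sqrt hb) (Real.sqrt_nonneg _)
    have huu : A ^ 2 * c ≤ (1 - t ^ 2) * (1 - x * t ^ 2) := by
      rw [hA2]; exact mul_le_mul_of_nonneg_left hb ht2.le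
    have hF'nonneg : 0 ≤ F' x t := by
      simp only [hF'_def]
      exact div_nonneg (mul_nonneg ht2.le (sq_nonneg t))
        (mul_nonneg (mul_nonneg (by norm_num) (Real.sqrt_nonneg _)) hu.le)
    rw [Real.norm_eq_abs, abs_of_nonneg hF'nonneg]
    have step1 : F' x t ≤ (1 - t ^ 2) * t ^ 2 / (2 * (A * Real.sqrt c) * (A ^ 2 * c)) := by
      simp only [hF'_def]
      have hd : 0 < 2 * (A * Real.sqrt c) * (A ^ 2 * c) :=
        mul_pos (mul_pos two_pos (mul_pos hA hcs)) (mul_pos (pow_pos hA 2) hc)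
      apply div_le_div_of_nonneg_left (mul_nonneg ht2.le (sq_nonneg t)) hd
      have hmul := mul_le_mul hsu huu (mul_nonneg (pow_nonneg hA.le 2) hc.le)
        (Real.sqrt_nonneg _)
      nlinarith [hmul]
    have step2 : (1 - t ^ 2) * t ^ 2 / (2 * (A * Real.sqrt c) * (A ^ 2 * c)) ≤
        (2 * c * Real.sqrt c)⁻¹ * A⁻¹ := by
      have ht2le : (1 - t ^ 2) * t ^ 2 ≤ A ^ 2 := by rw [hA2]; nlinarith [hmem.1, hmem.2]
      have hd : 0 < 2 * (A * Real.sqrt c) * (A ^ 2 * c) :=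
        mul_pos (mul_pos two_pos (mul_pos hA hcs)) (mul_pos (pow_pos hA 2) hc)
      have h1 : (1 - t ^ 2) * t ^ 2 / (2 * (A * Real.sqrt c) * (A ^ 2 * c)) ≤
          A ^ 2 / (2 * (A * Real.sqrt c) * (A ^ 2 * c)) :=
        div_le_div_of_nonneg_right ht2le hd.le
      refine h1.trans_eq ?_
      have hAne := hA.ne'
      have hcne := hc.ne'
      have hcsne := hcs.ne'
      field_simp
    exact step1.trans step2
  · -- differentiability of the integrand
    filter_upwards [hne] with t htne hmem x hx
    rw [Set.uIoc_of_le (by norm_num : (0:ℝ) ≤ 1)] at hmem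
    have ht1 : t < 1 := lt_of_le_of_ne hmem.2 htne
    have ht2 : 0 < 1 - t ^ 2 := by nlinarith [hmem.1]
    have hb := hkey x hx t hmem
    have hu0 : 0 < (1 - t ^ 2) * (1 - x * t ^ 2) := mul_pos ht2 (lt_of_lt_of_le hc hb)
    have hsqrt_pos : 0 < Real.sqrt ((1 - t ^ 2) * (1 - x * t ^ 2)) := Real.sqrt_pos.2 hu0
    have hu : HasDerivAt (fun y : ℝ => (1 - t ^ 2) * (1 - y * t ^ 2))
        (-((1 - t ^ 2) * t ^ 2)) x := by
      have h0 : HasDerivAt (fun y : ℝ => 1 - y * t ^ 2) (-(t ^ 2)) x := by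
        simpa using ((hasDerivAt_id x).mul_const (t ^ 2)).const_sub 1
      have := h0.const_mul (1 - t ^ 2)
      exact this.congr_deriv (by ring)
    have hsq := (Real.hasDerivAt_sqrt hu0.ne').comp x hu
    have hinv := hsq.inv hsqrt_pos.ne'
    have : (fun y : ℝ => 1 / Real.sqrt ((1 - t ^ 2) * (1 - y * t ^ 2))) =
        fun y : ℝ => (Real.sqrt ((1 - t ^ 2) * (1 - y * t ^ 2)))⁻¹ := by
      funext y; rw [one_div]
    rw [this]
    refine hinv.congr_deriv ?_
    simp only [hF'_def, Function.comp]
    rw [Real.sq_sqrt hu0.le]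
    have h2 := hsqrt_pos.ne'
    have h3 := hu0.ne'
    field_simp

theorem deriv_Phi (x : ℝ) (hx : x < 1) :
    deriv Phi x =
      (1 / (4 * Real.sqrt ((1 - x) * (1 + Real.sqrt (1 - x)) ^ 3))) *
        ellipticK ((1 - Real.sqrt (1 - x)) / (1 + Real.sqrt (1 - x))) +
      (1 / Real.sqrt ((1 - x) * (1 + Real.sqrt (1 - x)) ^ 5)) *
        deriv ellipticK ((1 - Real.sqrt (1 - x)) / (1 + Real.sqrt (1 - x))) := by
  have h1x : 0 < 1 - x := by linarith
  set s := Real.sqrt (1 - x) with hs_def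
  have hs : 0 < s := Real.sqrt_pos.2 h1x
  have hs2 : s ^ 2 = 1 - x := Real.sq_sqrt h1x.le
  have h1s : 0 < 1 + s := by linarith
  set q := Real.sqrt (1 + s) with hq_def
  have hq : 0 < q := Real.sqrt_pos.2 h1s
  have hq2 : q ^ 2 = 1 + s := Real.sq_sqrt h1s.le
  have hmlt : (1 - s) / (1 + s) < 1 := by
    rw [div_lt_one h1s]; linarith
  have hS : HasDerivAt (fun y : ℝ => Real.sqrt (1 - y)) (1 / (2 * s) * (-1)) x := by
    have h0 : HasDerivAt (fun y : ℝ => 1 - y) (-1 : ℝ) x := by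
      simpa using (hasDerivAt_id x).const_sub 1
    exact (Real.hasDerivAt_sqrt h1x.ne').comp x h0
  have hnum : HasDerivAt (fun y : ℝ => 1 - Real.sqrt (1 - y))
      (-(1 / (2 * s) * (-1))) x := hS.const_sub 1
  have hden : HasDerivAt (fun y : ℝ => 1 + Real.sqrt (1 - y))
      (1 / (2 * s) * (-1)) x := hS.const_add 1
  have hg : HasDerivAt (fun y : ℝ => (1 - Real.sqrt (1 - y)) / (1 + Real.sqrt (1 - y)))
      ((-(1 / (2 * s) * (-1)) * (1 + s) - (1 - s) * (1 / (2 * s) * (-1))) / (1 + s) ^ 2) x :=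
    hnum.div hden h1s.ne'
  have hK := (ellipticK_differentiableAt hmlt).hasDerivAt
  have hKg := hK.comp x hg
  have hq' : HasDerivAt (fun y : ℝ => Real.sqrt (1 + Real.sqrt (1 - y)))
      (1 / (2 * q) * (1 / (2 * s) * (-1))) x :=
    (Real.hasDerivAt_sqrt h1s.ne').comp x hden
  have hPhi := hKg.div hq' hq.ne'
  have hPhiEq : Phi = fun y : ℝ =>
      ellipticK ((1 - Real.sqrt (1 - y)) / (1 + Real.sqrt (1 - y))) /
        Real.sqrt (1 + Real.sqrt (1 - y)) := rfl
  simp only [Function.comp] at hPhi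
  rw [hPhiEq]
  rw [(show HasDerivAt (fun y : ℝ => ellipticK ((1 - Real.sqrt (1 - y)) / (1 + Real.sqrt (1 - y))) /
      Real.sqrt (1 + Real.sqrt (1 - y))) _ x from hPhi).deriv]
  have e3 : Real.sqrt ((1 - x) * (1 + s) ^ 3) = s * (1 + s) * q := by
    rw [show (1 - x) * (1 + s) ^ 3 = (s * (1 + s) * q) ^ 2 by
      rw [← hs2, ← hq2]; ring]
    exact Real.sqrt_sq (by positivity)
  have e5 : Real.sqrt ((1 - x) * (1 + s) ^ 5) = s * (1 + s) ^ 2 * q := by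
    rw [show (1 - x) * (1 + s) ^ 5 = (s * (1 + s) ^ 2 * q) ^ 2 by
      rw [← hs2, ← hq2]; ring]
    exact Real.sqrt_sq (by positivity)
  rw [e3, e5]
  rw [← hs_def, ← hq_def]
  set K := ellipticK ((1 - s) / (1 + s)) with hK_def
  set K' := deriv ellipticK ((1 - s) / (1 + s)) with hK'_def
  rw [← hq2]
  have hsne := hs.ne'
  have hqne := hq.ne'
  field_simp
  linear_combination (8 * K') * hq2
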